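/- arXiv:0904.0703 — 4 statements merged into one kernel-verified Lean document; each statement's English description precedes it below -/
import Mathlib

section
/- For any μ > 0, the pseudo-inverse M† satisfies the fixed point equation M† = (I + μMᵀM)^{-1} M† + (MᵀM + μ^{-1}I)^{-1} Mᵀ. -/
open Matrix

attribute [local instance] Matrix.frobeniusNormedAddCommGroup

/-- `P` is the Moore–Penrose pseudo-inverse of `M` (the four Penrose conditions). -/
def IsMoorePenrose {m n : ℕ} (M : Matrix (Fin m) (Fin n) ℝ)
    (P : Matrix (Fin n) (Fin m) ℝ) : Prop :=
  M * P * M = M ∧ P * M * P = P ∧ (M * P)ᵀ = M * P ∧ (P * M)ᵀ = P * M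

theorem stmt4 {m n : ℕ} (M : Matrix (Fin m) (Fin n) ℝ) (P : Matrix (Fin n) (Fin m) ℝ)
    (hP : IsMoorePenrose M P) (μ : ℝ) (hμ : 0 < μ) :
    P = (1 + μ • (Mᵀ * M))⁻¹ * P + (Mᵀ * M + μ⁻¹ • (1 : Matrix (Fin n) (Fin n) ℝ))⁻¹ * Mᵀ := by
  obtain ⟨h1, h2, h3, h4⟩ := hP
  set S : Matrix (Fin n) (Fin n) ℝ := Mᵀ * M with hS
  have hSpsd : S.PosSemidef := by
    have := Matrix.posSemidef_conjTranspose_mul_self M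
    simpa [Matrix.conjTranspose_eq_transpose_of_trivial] using this
  have hsmul : (μ • S).PosSemidef := by
    refine ⟨?_, fun x => ?_⟩
    · show (μ • S)ᴴ = μ • S
      rw [Matrix.conjTranspose_smul, hSpsd.1.eq]
      simp
    · exact (hSpsd.smul hμ.le).2 x
  have hA : (1 + μ • S).PosDef :=
    Matrix.PosDef.one.add_posSemidef hsmul
  have hAunit : IsUnit (1 + μ • S).det := (Matrix.isUnit_iff_isUnit_det _).mp hA.isUnit
  -- key identity : S * P = Mᵀ
  have hkey : S * P = Mᵀ := by
    conv_rhs => rw [← h1]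
    rw [Matrix.transpose_mul, h3, hS, Matrix.mul_assoc]
  have hAP : (1 + μ • S) * P = P + μ • Mᵀ := by
    rw [Matrix.add_mul, Matrix.one_mul, Matrix.smul_mul, hkey]
  -- second factor
  have hμ' : μ ≠ 0 := hμ.ne'
  have hfac : S + μ⁻¹ • (1 : Matrix (Fin n) (Fin n) ℝ) = μ⁻¹ • (1 + μ • S) := by
    rw [smul_add, smul_smul, inv_mul_cancel₀ hμ', one_smul, add_comm]
  have hsmulinv : (μ⁻¹ • (1 + μ • S))⁻¹ = μ • (1 + μ • S)⁻¹ := by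
    apply Matrix.inv_eq_right_inv
    rw [Matrix.smul_mul, Matrix.mul_smul, smul_smul, inv_mul_cancel₀ hμ',
      Matrix.mul_nonsing_inv _ hAunit, one_smul]
  rw [hfac, hsmulinv]
  calc P = (1 + μ • S)⁻¹ * ((1 + μ • S) * P) := by
            rw [← Matrix.mul_assoc, Matrix.nonsing_inv_mul _ hAunit, Matrix.one_mul]
    _ = (1 + μ • S)⁻¹ * (P + μ • Mᵀ) := by rw [hAP]
    _ = _ := by rw [Matrix.mul_add, Matrix.mul_smul, Matrix.smul_mul]
end

section
/- If MᵀM is positive definite with smallest eigenvalue α > 0 and μ > 0, then the map φ(Φ) = (I + μMᵀM)^{-1}Φ + (MᵀM + μ^{-1}I)^{-1}Mᵀ is a strict contraction with Lipschitz constant 1/(1 + αμ) < 1 in the Frobenius norm. -/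
open Matrix

attribute [local instance] Matrix.frobeniusNormedAddCommGroup

lemma frob_norm_sqrt {k l : ℕ} (A : Matrix (Fin k) (Fin l) ℝ) :
    ‖A‖ = Real.sqrt (∑ i, ∑ j, (A i j) ^ 2) := by
  rw [Matrix.frobenius_norm_def, Real.sqrt_eq_rpow]
  congr 1
  refine Finset.sum_congr rfl fun i _ => Finset.sum_congr rfl fun j _ => ?_
  rw [show (2:ℝ) = ((2:ℕ):ℝ) by norm_num, Real.rpow_natCast]
  simp [sq_abs, Real.norm_eq_abs]

theorem stmt7 {m n : ℕ} (M : Matrix (Fin m) (Fin n) ℝ)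
    (hpd : (Mᵀ * M).PosDef) (α μ : ℝ) (hα : 0 < α) (hμ : 0 < μ)
    (heig : ∃ v : Fin n → ℝ, v ≠ 0 ∧ (Mᵀ * M) *ᵥ v = α • v)
    (hmin : ∀ (β : ℝ) (v : Fin n → ℝ), v ≠ 0 → (Mᵀ * M) *ᵥ v = β • v → α ≤ β) :
    (1 : ℝ) / (1 + α * μ) < 1 ∧
    ∀ Φ Ψ : Matrix (Fin n) (Fin m) ℝ,
      ‖((1 + μ • (Mᵀ * M))⁻¹ * Φ + (Mᵀ * M + μ⁻¹ • 1)⁻¹ * Mᵀ)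
          - ((1 + μ • (Mᵀ * M))⁻¹ * Ψ + (Mᵀ * M + μ⁻¹ • 1)⁻¹ * Mᵀ)‖
        ≤ (1 / (1 + α * μ)) * ‖Φ - Ψ‖ := by
  have hden : (0:ℝ) < 1 + α * μ := by positivity
  refine ⟨by rw [div_lt_one hden]; nlinarith, ?_⟩
  intro Φ Ψ
  set A := Mᵀ * M with hAdef
  have hA : A.IsHermitian := hpd.1
  -- quadratic lower bound from the minimal eigenvalue
  have hquad : ∀ x : Fin n → ℝ, α * (x ⬝ᵥ x) ≤ x ⬝ᵥ (A *ᵥ x) := by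
    have hC : (A - α • 1).IsHermitian := by
      simp only [Matrix.IsHermitian, Matrix.conjTranspose_sub, Matrix.conjTranspose_smul, hA.eq,
        Matrix.conjTranspose_one, star_trivial]
    have hev : ∀ i, 0 ≤ hC.eigenvalues i := by
      intro i
      have hv := hC.mulVec_eigenvectorBasis i
      set v : Fin n → ℝ := ⇑(hC.eigenvectorBasis i) with hvdef
      have hvne : v ≠ 0 := by
        intro h
        exact hC.eigenvectorBasis.orthonormal.ne_zero i (by ext j; exact congrFun h j)
      have hAv : A *ᵥ v = (hC.eigenvalues i + α) • v := by
        have h1 : A *ᵥ v - α • v = hC.eigenvalues i • v := by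
          simpa [Matrix.sub_mulVec, Matrix.smul_mulVec, Matrix.one_mulVec] using hv
        have h2 := congrArg (· + α • v) h1
        simp only [sub_add_cancel] at h2
        rw [h2, add_smul, add_comm]
      have := hmin _ v hvne hAv
      linarith
    have hpsd := hC.posSemidef_iff_eigenvalues_nonneg.mpr hev
    intro x
    have h0 := hpsd.dotProduct_mulVec_nonneg x
    simp only [star_trivial] at h0
    have h2 : x ⬝ᵥ ((A - α • 1) *ᵥ x) = x ⬝ᵥ (A *ᵥ x) - α * (x ⬝ᵥ x) := by
      simp [Matrix.sub_mulVec, Matrix.smul_mulVec, Matrix.one_mulVec, dotProduct_sub,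
        dotProduct_smul, smul_eq_mul]
    rw [h2] at h0
    linarith
  set B := (1 : Matrix (Fin n) (Fin n) ℝ) + μ • A with hBdef
  have hBquad : ∀ x : Fin n → ℝ, (1 + α * μ) * (x ⬝ᵥ x) ≤ x ⬝ᵥ (B *ᵥ x) := by
    intro x
    have h1 : x ⬝ᵥ (B *ᵥ x) = x ⬝ᵥ x + μ * (x ⬝ᵥ (A *ᵥ x)) := by
      simp [hBdef, Matrix.add_mulVec, Matrix.one_mulVec, Matrix.smul_mulVec,
        dotProduct_add, dotProduct_smul, smul_eq_mul]
    have h2 := mul_le_mul_of_nonneg_left (hquad x) hμ.le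
    rw [h1]; nlinarith
  have hBherm : B.IsHermitian := by
    simp only [Matrix.IsHermitian, hBdef, Matrix.conjTranspose_add, Matrix.conjTranspose_smul,
      Matrix.conjTranspose_one, hA.eq, star_trivial]
  have hBpd : B.PosDef := by
    refine Matrix.PosDef.of_dotProduct_mulVec_pos hBherm fun x hx => ?_
    have h1 := hBquad x
    have h2 : 0 < x ⬝ᵥ x :=
      lt_of_le_of_ne (Finset.sum_nonneg fun i _ => mul_self_nonneg (x i))
        (Ne.symm ((dotProduct_self_eq_zero (v := x)).not.mpr hx))
    simp only [star_trivial]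
    nlinarith
  have hBunit : IsUnit B.det := hBpd.det_pos.ne'.isUnit
  have hBinv : B * B⁻¹ = 1 := Matrix.mul_nonsing_inv B hBunit
  set X := Φ - Ψ with hXdef
  set D := B⁻¹ * X with hDdef
  have hBD : B * D = X := by
    rw [hDdef, ← Matrix.mul_assoc, hBinv, Matrix.one_mul]
  -- per-column estimate
  have hkey : ∀ (d x : Fin n → ℝ), B *ᵥ d = x →
      d ⬝ᵥ d ≤ (1 / (1 + α * μ)) ^ 2 * (x ⬝ᵥ x) := by
    intro d x hdx
    have h1 : (1 + α * μ) * (d ⬝ᵥ d) ≤ d ⬝ᵥ x := by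
      rw [← hdx]; exact hBquad d
    have hCS : (d ⬝ᵥ x) ^ 2 ≤ (d ⬝ᵥ d) * (x ⬝ᵥ x) := by
      simpa [dotProduct, sq] using
        Finset.sum_mul_sq_le_sq_mul_sq Finset.univ d x
    have dpnn : ∀ y : Fin n → ℝ, 0 ≤ y ⬝ᵥ y := fun y =>
      Finset.sum_nonneg fun i _ => mul_self_nonneg (y i)
    have hdd : 0 ≤ d ⬝ᵥ d := dpnn d
    have hxx : 0 ≤ x ⬝ᵥ x := dpnn x
    rcases eq_or_lt_of_le hdd with h0 | h0
    · rw [← h0]; exact mul_nonneg (by positivity) hxx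
    · rw [div_pow, one_pow, one_div_mul_eq_div, le_div_iff₀ (by positivity)]
      have h3 : ((1 + α * μ) * (d ⬝ᵥ d)) ^ 2 ≤ (d ⬝ᵥ x) ^ 2 :=
        pow_le_pow_left₀ (by positivity) h1 2
      nlinarith
  have hcol : ∀ j, B *ᵥ (fun i => D i j) = fun i => X i j := by
    intro j
    ext i
    have := congrFun (congrFun hBD i) j
    simpa [Matrix.mul_apply, Matrix.mulVec, dotProduct] using this
  have hsum : (∑ i, ∑ j, (D i j) ^ 2) ≤ (1 / (1 + α * μ)) ^ 2 * ∑ i, ∑ j, (X i j) ^ 2 := by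
    rw [Finset.sum_comm, Finset.sum_comm (f := fun i j => (X i j) ^ 2), Finset.mul_sum]
    refine Finset.sum_le_sum fun j _ => ?_
    have := hkey (fun i => D i j) (fun i => X i j) (hcol j)
    simpa [dotProduct, sq] using this
  have hfinal : ‖D‖ ≤ (1 / (1 + α * μ)) * ‖X‖ := by
    rw [frob_norm_sqrt, frob_norm_sqrt]
    calc Real.sqrt (∑ i, ∑ j, (D i j) ^ 2)
        ≤ Real.sqrt ((1 / (1 + α * μ)) ^ 2 * ∑ i, ∑ j, (X i j) ^ 2) := Real.sqrt_le_sqrt hsum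
      _ = (1 / (1 + α * μ)) * Real.sqrt (∑ i, ∑ j, (X i j) ^ 2) := by
          rw [Real.sqrt_mul (by positivity), Real.sqrt_sq (by positivity)]
  calc ‖((1 + μ • A)⁻¹ * Φ + (A + μ⁻¹ • 1)⁻¹ * Mᵀ)
          - ((1 + μ • A)⁻¹ * Ψ + (A + μ⁻¹ • 1)⁻¹ * Mᵀ)‖
      = ‖D‖ := by rw [add_sub_add_right_eq_sub, ← Matrix.mul_sub]
    _ ≤ (1 / (1 + α * μ)) * ‖X‖ := hfinal
end

section
/- Let α₁ be the smallest nonzero eigenvalue of MᵀM (assumed to exist, i.e., M ≠ 0). Then for every Φ ∈ ℝ^{n×m}, the Frobenius distance from Φ to the solution set S = M† + ker(Φ ↦ MΦ) satisfies dist_F(Φ, S) ≤ (1/α₁)‖Mᵀ(MΦ − I)‖_F. -/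
open Matrix

attribute [local instance] Matrix.frobeniusNormedAddCommGroup

open scoped RealInnerProductSpace

section aux

variable {m n : ℕ}

private lemma hermA (M : Matrix (Fin m) (Fin n) ℝ) : (Mᵀ * M).IsHermitian := by
  have h := Matrix.isHermitian_conjTranspose_mul_self M
  have e : Mᴴ = Mᵀ := by ext i j; simp
  rwa [e] at h

private lemma Mv_zero (M : Matrix (Fin m) (Fin n) ℝ) {v : Fin n → ℝ}
    (h : (Mᵀ * M) *ᵥ v = 0) : M *ᵥ v = 0 := by
  have key : (M *ᵥ v) ⬝ᵥ (M *ᵥ v) = 0 := by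
    have h1 : (M *ᵥ v) ⬝ᵥ (M *ᵥ v) = v ⬝ᵥ ((Mᵀ * M) *ᵥ v) := by
      rw [← mulVec_mulVec, dotProduct_mulVec v Mᵀ, ← mulVec_transpose, transpose_transpose]
    rw [h1, h, dotProduct_zero]
  exact dotProduct_self_eq_zero.mp key

/-- Spectral bound: if `w` is fixed by `P*M` then `α₁² ‖w‖² ≤ ‖(MᵀM) w‖²`. -/
private lemma spec_bound (M : Matrix (Fin m) (Fin n) ℝ) (α₁ : ℝ) (hpos : 0 < α₁)
    (hmin : ∀ (β : ℝ) (v : Fin n → ℝ), v ≠ 0 → (Mᵀ * M) *ᵥ v = β • v → β ≠ 0 → α₁ ≤ β)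
    (P : Matrix (Fin n) (Fin m) ℝ) (hQ : (P * M)ᵀ = P * M)
    (w : Fin n → ℝ) (hw : (P * M) *ᵥ w = w) :
    α₁ ^ 2 * (w ⬝ᵥ w) ≤ ((Mᵀ * M) *ᵥ w) ⬝ᵥ ((Mᵀ * M) *ᵥ w) := by
  set A := Mᵀ * M with hAdef
  have hA : A.IsHermitian := hermA M
  have hAT : Aᵀ = A := by
    have := hA.eq
    simpa [conjTranspose, Matrix.map, Matrix.transpose] using this
  set b := hA.eigenvectorBasis with hb
  set lam := hA.eigenvalues with hlam
  have hnz : ∀ i, (⇑(b i) : Fin n → ℝ) ≠ 0 := by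
    intro i hzero
    have h1 : ‖b i‖ = 1 := b.orthonormal.1 i
    have : (b i : EuclideanSpace ℝ (Fin n)) = 0 := by
      ext k
      exact congrFun hzero k
    rw [this, norm_zero] at h1
    norm_num at h1
  have heigvec : ∀ i, A *ᵥ ⇑(b i) = lam i • ⇑(b i) := fun i => hA.mulVec_eigenvectorBasis i
  -- inner products with basis vectors
  set W : EuclideanSpace ℝ (Fin n) := (WithLp.equiv 2 _).symm w with hW
  set AW : EuclideanSpace ℝ (Fin n) := (WithLp.equiv 2 _).symm (A *ᵥ w) with hAW
  have hinner : ∀ (x y : Fin n → ℝ),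
      ⟪((WithLp.equiv 2 (Fin n → ℝ)).symm x : EuclideanSpace ℝ (Fin n)),
        (WithLp.equiv 2 (Fin n → ℝ)).symm y⟫ = x ⬝ᵥ y := by
    intro x y
    simp [PiLp.inner_apply, RCLike.inner_apply, dotProduct, mul_comm]
  set c : Fin n → ℝ := fun i => ⟪b i, W⟫ with hc
  -- ⟪b i, AW⟫ = lam i * c i
  have hAc : ∀ i, ⟪b i, AW⟫ = lam i * c i := by
    intro i
    have h1 : ⟪b i, AW⟫ = (⇑(b i)) ⬝ᵥ (A *ᵥ w) := by
      have := hinner (⇑(b i)) (A *ᵥ w)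
      simpa [hAW] using this
    have h2 : (⇑(b i)) ⬝ᵥ (A *ᵥ w) = (A *ᵥ ⇑(b i)) ⬝ᵥ w := by
      rw [dotProduct_mulVec, ← mulVec_transpose, hAT]
    have h3 : (A *ᵥ ⇑(b i)) ⬝ᵥ w = lam i * ((⇑(b i)) ⬝ᵥ w) := by
      rw [heigvec i, smul_dotProduct]
      rfl
    have h4 : c i = (⇑(b i)) ⬝ᵥ w := by
      have := hinner (⇑(b i)) w
      simpa [hc, hW] using this
    rw [h1, h2, h3, h4]
  -- lam i = 0 → c i = 0
  have hker : ∀ i, lam i = 0 → c i = 0 := by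
    intro i hli
    have hMbi : M *ᵥ ⇑(b i) = 0 := by
      apply Mv_zero
      rw [heigvec i, hli, zero_smul]
    have h4 : c i = (⇑(b i)) ⬝ᵥ w := by
      have := hinner (⇑(b i)) w
      simpa [hc, hW] using this
    rw [h4, ← hw, dotProduct_mulVec, ← mulVec_transpose, hQ, ← mulVec_mulVec, hMbi,
      mulVec_zero, zero_dotProduct]
  -- nonzero eigenvalues are ≥ α₁
  have hge : ∀ i, lam i ≠ 0 → α₁ ≤ lam i := by
    intro i hli
    exact hmin (lam i) (⇑(b i)) (hnz i) (heigvec i) hli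
  -- expand both dot products in the eigenbasis
  have hcomm : ∀ i, ⟪W, b i⟫ = c i := fun i => real_inner_comm (b i) W
  have hcommA : ∀ i, ⟪AW, b i⟫ = ⟪b i, AW⟫ := fun i => real_inner_comm (b i) AW
  have hwdot : w ⬝ᵥ w = ∑ i, c i * c i := by
    calc w ⬝ᵥ w = ⟪W, W⟫ := (hinner w w).symm
    _ = ∑ i, ⟪W, b i⟫ * ⟪b i, W⟫ := (b.sum_inner_mul_inner W W).symm
    _ = ∑ i, c i * c i := by
        refine Finset.sum_congr rfl fun i _ => ?_
        rw [hcomm i]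
  have hAdot : (A *ᵥ w) ⬝ᵥ (A *ᵥ w) = ∑ i, (lam i * c i) * (lam i * c i) := by
    calc (A *ᵥ w) ⬝ᵥ (A *ᵥ w) = ⟪AW, AW⟫ := (hinner _ _).symm
    _ = ∑ i, ⟪AW, b i⟫ * ⟪b i, AW⟫ := (b.sum_inner_mul_inner AW AW).symm
    _ = ∑ i, (lam i * c i) * (lam i * c i) := by
        refine Finset.sum_congr rfl fun i _ => ?_
        rw [hcommA i, hAc i]
  rw [hwdot, hAdot, Finset.mul_sum]
  apply Finset.sum_le_sum
  intro i _
  by_cases hli : lam i = 0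
  · rw [hker i hli, hli]; ring_nf; exact le_refl 0
  · have h1 := hge i hli
    have h2 : α₁ ^ 2 ≤ (lam i) ^ 2 := by nlinarith
    nlinarith [sq_nonneg (c i), sq_nonneg (lam i * c i)]

/-- The vector bound `α₁² ‖Px‖² ≤ ‖Mᵀx‖²`. -/
private lemma vec_bound (M : Matrix (Fin m) (Fin n) ℝ) (α₁ : ℝ) (hpos : 0 < α₁)
    (hmin : ∀ (β : ℝ) (v : Fin n → ℝ), v ≠ 0 → (Mᵀ * M) *ᵥ v = β • v → β ≠ 0 → α₁ ≤ β)
    (P : Matrix (Fin n) (Fin m) ℝ) (hP : IsMoorePenrose M P) (x : Fin m → ℝ) :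
    α₁ ^ 2 * ((P *ᵥ x) ⬝ᵥ (P *ᵥ x)) ≤ (Mᵀ *ᵥ x) ⬝ᵥ (Mᵀ *ᵥ x) := by
  obtain ⟨h1, h2, h3, h4⟩ := hP
  -- MᵀMP = Mᵀ
  have hMMP : Mᵀ * M * P = Mᵀ := by
    have e1 : (M * P * M)ᵀ = Mᵀ := by rw [h1]
    calc Mᵀ * M * P = Mᵀ * (M * P) := Matrix.mul_assoc _ _ _
    _ = Mᵀ * (M * P)ᵀ := by rw [h3]
    _ = Mᵀ * (Pᵀ * Mᵀ) := by rw [transpose_mul]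
    _ = (M * P * M)ᵀ := by rw [transpose_mul, transpose_mul]
    _ = Mᵀ := e1
  have hfix : (P * M) *ᵥ (P *ᵥ x) = P *ᵥ x := by
    rw [mulVec_mulVec, h2]
  have hAeq : (Mᵀ * M) *ᵥ (P *ᵥ x) = Mᵀ *ᵥ x := by
    rw [mulVec_mulVec, hMMP]
  have := spec_bound M α₁ hpos hmin P h4 (P *ᵥ x) hfix
  rwa [hAeq] at this

/-- Frobenius-norm bound `‖P X‖ ≤ (1/α₁) ‖Mᵀ X‖`. -/
private lemma frob_bound (M : Matrix (Fin m) (Fin n) ℝ) (α₁ : ℝ) (hpos : 0 < α₁)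
    (hmin : ∀ (β : ℝ) (v : Fin n → ℝ), v ≠ 0 → (Mᵀ * M) *ᵥ v = β • v → β ≠ 0 → α₁ ≤ β)
    (P : Matrix (Fin n) (Fin m) ℝ) (hP : IsMoorePenrose M P) (X : Matrix (Fin m) (Fin m) ℝ) :
    ‖P * X‖ ≤ (1 / α₁) * ‖Mᵀ * X‖ := by
  have hsum : ∀ j : Fin m,
      (∑ i, ((P * X) i j) ^ 2) ≤ (1 / α₁) ^ 2 * ∑ i, ((Mᵀ * X) i j) ^ 2 := by
    intro j
    have hv := vec_bound M α₁ hpos hmin P hP (fun k => X k j)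
    have e1 : (P *ᵥ fun k => X k j) ⬝ᵥ (P *ᵥ fun k => X k j) = ∑ i, ((P * X) i j) ^ 2 := by
      simp [Matrix.mulVec, Matrix.mul_apply, dotProduct, pow_two]
    have e2 : (Mᵀ *ᵥ fun k => X k j) ⬝ᵥ (Mᵀ *ᵥ fun k => X k j) = ∑ i, ((Mᵀ * X) i j) ^ 2 := by
      simp [Matrix.mulVec, Matrix.mul_apply, dotProduct, pow_two]
    rw [e1, e2] at hv
    have hα2 : (0:ℝ) < α₁ ^ 2 := by positivity
    rw [div_pow, one_pow, one_div, ← div_eq_inv_mul, le_div_iff₀ hα2]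
    linarith
  have key : (∑ i, ∑ j, ((P * X) i j) ^ 2) ≤ (1 / α₁) ^ 2 * ∑ i, ∑ j, ((Mᵀ * X) i j) ^ 2 := by
    have e3 : (∑ i, ∑ j, ((P * X) i j) ^ 2) = ∑ j, ∑ i, ((P * X) i j) ^ 2 :=
      Finset.sum_comm
    have e4 : (∑ i, ∑ j, ((Mᵀ * X) i j) ^ 2) = ∑ j, ∑ i, ((Mᵀ * X) i j) ^ 2 :=
      Finset.sum_comm
    rw [e3, e4, Finset.mul_sum]
    exact Finset.sum_le_sum fun j _ => hsum j
  rw [frobenius_norm_def, frobenius_norm_def]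
  have hrw : ∀ {p q : ℕ} (A : Matrix (Fin p) (Fin q) ℝ),
      (∑ i, ∑ j, ‖A i j‖ ^ (2:ℝ)) = ∑ i, ∑ j, (A i j) ^ 2 := by
    intro p q A
    congr 1; ext i; congr 1; ext j
    rw [Real.norm_eq_abs, Real.rpow_two, sq_abs]
  rw [hrw, hrw, ← Real.sqrt_eq_rpow, ← Real.sqrt_eq_rpow]
  have h2 : Real.sqrt (∑ i, ∑ j, ((P * X) i j) ^ 2)
      ≤ Real.sqrt ((1 / α₁) ^ 2 * ∑ i, ∑ j, ((Mᵀ * X) i j) ^ 2) := Real.sqrt_le_sqrt key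
  rwa [Real.sqrt_mul (by positivity), Real.sqrt_sq (by positivity)] at h2

end aux

theorem stmt14 {m n : ℕ} (M : Matrix (Fin m) (Fin n) ℝ) (hM : M ≠ 0)
    (P : Matrix (Fin n) (Fin m) ℝ) (hP : IsMoorePenrose M P) (α₁ : ℝ) (hα₁ : α₁ ≠ 0)
    (heig : ∃ v : Fin n → ℝ, v ≠ 0 ∧ (Mᵀ * M) *ᵥ v = α₁ • v)
    (hmin : ∀ (β : ℝ) (v : Fin n → ℝ), v ≠ 0 → (Mᵀ * M) *ᵥ v = β • v → β ≠ 0 → α₁ ≤ β) :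
    ∀ Φ : Matrix (Fin n) (Fin m) ℝ,
      Metric.infDist Φ {Ψ : Matrix (Fin n) (Fin m) ℝ | ∃ K : Matrix (Fin n) (Fin m) ℝ, M * K = 0 ∧ Ψ = P + K}
        ≤ (1 / α₁) * ‖Mᵀ * (M * Φ - 1)‖ := by
  -- α₁ > 0
  have hpos : 0 < α₁ := by
    obtain ⟨v, hv0, hv⟩ := heig
    have h1 : v ⬝ᵥ ((Mᵀ * M) *ᵥ v) = α₁ * (v ⬝ᵥ v) := by
      rw [hv, dotProduct_smul]; rfl
    have h2 : v ⬝ᵥ ((Mᵀ * M) *ᵥ v) = (M *ᵥ v) ⬝ᵥ (M *ᵥ v) := by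
      rw [← mulVec_mulVec, dotProduct_mulVec v Mᵀ, ← mulVec_transpose, transpose_transpose]
    have h3 : 0 ≤ (M *ᵥ v) ⬝ᵥ (M *ᵥ v) :=
      Finset.sum_nonneg fun i _ => mul_self_nonneg ((M *ᵥ v) i)
    have hnn : 0 ≤ v ⬝ᵥ v := Finset.sum_nonneg fun i _ => mul_self_nonneg (v i)
    have h4 : 0 < v ⬝ᵥ v :=
      lt_of_le_of_ne hnn (fun h => hv0 (dotProduct_self_eq_zero.mp h.symm))
    have h5 : 0 ≤ α₁ * (v ⬝ᵥ v) := by rw [← h1, h2]; exact h3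
    have h6 : 0 ≤ α₁ := (mul_nonneg_iff_of_pos_right h4).mp h5
    exact lt_of_le_of_ne h6 (Ne.symm hα₁)
  intro Φ
  obtain ⟨h1, h2, h3, h4⟩ := hP
  set Ψ : Matrix (Fin n) (Fin m) ℝ := P + (Φ - P * (M * Φ)) with hΨ
  have hmem : Ψ ∈ {Ψ : Matrix (Fin n) (Fin m) ℝ |
      ∃ K : Matrix (Fin n) (Fin m) ℝ, M * K = 0 ∧ Ψ = P + K} := by
    refine ⟨Φ - P * (M * Φ), ?_, rfl⟩
    rw [Matrix.mul_sub, ← Matrix.mul_assoc, ← Matrix.mul_assoc, h1, sub_self]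
  have hle := Metric.infDist_le_dist_of_mem (x := Φ) hmem
  have hdist : dist Φ Ψ = ‖P * (M * Φ - 1)‖ := by
    rw [dist_eq_norm]
    congr 1
    rw [hΨ, Matrix.mul_sub, Matrix.mul_one]
    abel
  have hbound := frob_bound M α₁ hpos hmin P ⟨h1, h2, h3, h4⟩ (M * Φ - 1)
  calc Metric.infDist Φ _ ≤ dist Φ Ψ := hle
  _ = ‖P * (M * Φ - 1)‖ := hdist
  _ ≤ (1 / α₁) * ‖Mᵀ * (M * Φ - 1)‖ := hbound
end

section
/- If M is invertible (m = n), the proximal sequence Φ_{k+1} = (I + μMᵀM)^{-1}(Φ_k + μMᵀ) with constant μ > 0 converges to M^{-1} from any initial point Φ_0, and ‖Φ_{k} − M^{-1}‖_F ≤ (1/(1 + α₁μ))^k ‖Φ_0 − M^{-1}‖_F where α₁ is the smallest eigenvalue of MᵀM. -/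
open Matrix

attribute [local instance] Matrix.frobeniusNormedAddCommGroup

lemma quad_lower' {n : ℕ} (B : Matrix (Fin n) (Fin n) ℝ) (hB : B.IsHermitian) (α : ℝ)
    (hmin : ∀ (β : ℝ) (v : Fin n → ℝ), v ≠ 0 → B *ᵥ v = β • v → α ≤ β) (w : Fin n → ℝ) :
    α * (w ⬝ᵥ w) ≤ w ⬝ᵥ (B *ᵥ w) := by
  have hBt : Bᵀ = B := by simpa using hB.eq
  have hC : (B - α • 1).IsHermitian := by
    simp [Matrix.IsHermitian, Matrix.conjTranspose_sub, hBt]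
  have hev : ∀ i, 0 ≤ hC.eigenvalues i := by
    intro i
    have hu := hC.mulVec_eigenvectorBasis i
    have hune : ⇑(hC.eigenvectorBasis i) ≠ 0 := by
      intro h
      have h1 := hC.eigenvectorBasis.orthonormal.1 i
      rw [show (hC.eigenvectorBasis i) = 0 from (WithLp.ofLp_eq_zero 2).mp h] at h1
      simp at h1
    have hBu : B *ᵥ ⇑(hC.eigenvectorBasis i) = (hC.eigenvalues i + α) • ⇑(hC.eigenvectorBasis i) := by
      have h2 : (B - α • 1) *ᵥ ⇑(hC.eigenvectorBasis i)
          = B *ᵥ ⇑(hC.eigenvectorBasis i) - α • ⇑(hC.eigenvectorBasis i) := by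
        simp [Matrix.sub_mulVec, Matrix.smul_mulVec]
      rw [h2] at hu
      rw [add_smul]
      rw [sub_eq_iff_eq_add] at hu
      rw [hu]
    have := hmin _ _ hune hBu
    linarith
  have hps := hC.posSemidef_iff_eigenvalues_nonneg.mpr hev
  have h3 := hps.dotProduct_mulVec_nonneg w
  simp only [Matrix.sub_mulVec, Matrix.smul_mulVec, Matrix.one_mulVec, dotProduct_sub,
    dotProduct_smul, star_trivial, smul_eq_mul] at h3
  linarith

lemma vec_lower' {n : ℕ} (A : Matrix (Fin n) (Fin n) ℝ) (c : ℝ) (hc : 0 < c)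
    (hq : ∀ w : Fin n → ℝ, c * (w ⬝ᵥ w) ≤ w ⬝ᵥ (A *ᵥ w)) (w : Fin n → ℝ) :
    c ^ 2 * (w ⬝ᵥ w) ≤ (A *ᵥ w) ⬝ᵥ (A *ᵥ w) := by
  have ht : 0 ≤ w ⬝ᵥ w := Finset.sum_nonneg fun i _ => mul_self_nonneg _
  have hu : 0 ≤ (A *ᵥ w) ⬝ᵥ (A *ᵥ w) := Finset.sum_nonneg fun i _ => mul_self_nonneg _
  have hcs : (w ⬝ᵥ (A *ᵥ w)) ^ 2 ≤ (w ⬝ᵥ w) * ((A *ᵥ w) ⬝ᵥ (A *ᵥ w)) := by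
    simpa [dotProduct, pow_two] using
      Finset.sum_mul_sq_le_sq_mul_sq Finset.univ w (A *ᵥ w)
  have hd := hq w
  rcases eq_or_lt_of_le ht with h0 | h0
  · have : w ⬝ᵥ w = 0 := h0.symm
    rw [this]; simpa using hu
  · nlinarith [mul_self_le_mul_self (mul_nonneg hc.le ht) hd, hcs, h0]

lemma frob_sqrt' {n : ℕ} (X : Matrix (Fin n) (Fin n) ℝ) :
    ‖X‖ = Real.sqrt (∑ i, ∑ j, (X i j) ^ 2) := by
  rw [Matrix.frobenius_norm_def, Real.sqrt_eq_rpow]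
  congr 1
  refine Finset.sum_congr rfl fun i _ => Finset.sum_congr rfl fun j _ => ?_
  rw [show ((2:ℝ)) = ((2:ℕ):ℝ) by norm_num, Real.rpow_natCast]
  simp [sq_abs, Real.norm_eq_abs]

lemma mat_lower' {n : ℕ} (A : Matrix (Fin n) (Fin n) ℝ) (c : ℝ) (hc : 0 < c)
    (hv : ∀ w : Fin n → ℝ, c ^ 2 * (w ⬝ᵥ w) ≤ (A *ᵥ w) ⬝ᵥ (A *ᵥ w))
    (Z : Matrix (Fin n) (Fin n) ℝ) : c * ‖Z‖ ≤ ‖A * Z‖ := by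
  rw [frob_sqrt', frob_sqrt']
  have key : c ^ 2 * (∑ i, ∑ j, (Z i j) ^ 2) ≤ ∑ i, ∑ j, ((A * Z) i j) ^ 2 := by
    have h1 : ∑ i : Fin n, ∑ j, (Z i j)^2 = ∑ j : Fin n, ∑ i, (Z i j)^2 := Finset.sum_comm
    have h2 : ∑ i : Fin n, ∑ j, ((A * Z) i j)^2 = ∑ j : Fin n, ∑ i, ((A * Z) i j)^2 :=
      Finset.sum_comm
    rw [h1, h2, Finset.mul_sum]
    refine Finset.sum_le_sum fun j _ => ?_
    have := hv (fun k => Z k j)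
    simpa [dotProduct, Matrix.mulVec, Matrix.mul_apply, pow_two] using this
  calc c * Real.sqrt (∑ i, ∑ j, (Z i j) ^ 2)
      = Real.sqrt (c ^ 2 * (∑ i, ∑ j, (Z i j) ^ 2)) := by
        rw [Real.sqrt_mul (by positivity), Real.sqrt_sq hc.le]
    _ ≤ _ := Real.sqrt_le_sqrt key

theorem stmt18 {n : ℕ} (M : Matrix (Fin n) (Fin n) ℝ) (hM : IsUnit M)
    (μ α₁ : ℝ) (hμ : 0 < μ) (hα₁ : 0 < α₁)
    (heig : ∃ v : Fin n → ℝ, v ≠ 0 ∧ (Mᵀ * M) *ᵥ v = α₁ • v)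
    (hmin : ∀ (β : ℝ) (v : Fin n → ℝ), v ≠ 0 → (Mᵀ * M) *ᵥ v = β • v → α₁ ≤ β)
    (Φ : ℕ → Matrix (Fin n) (Fin n) ℝ)
    (hrec : ∀ k, Φ (k + 1) = (1 + μ • (Mᵀ * M))⁻¹ * (Φ k + μ • Mᵀ)) :
    Filter.Tendsto Φ Filter.atTop (nhds M⁻¹) ∧
    ∀ k, ‖Φ k - M⁻¹‖ ≤ (1 / (1 + α₁ * μ)) ^ k * ‖Φ 0 - M⁻¹‖ := by
  clear heig
  set c : ℝ := 1 + α₁ * μ with hcdef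
  have hc0 : 0 < c := by positivity
  have hc1 : 1 < c := by nlinarith
  have hBt : (Mᵀ * M)ᵀ = Mᵀ * M := by rw [Matrix.transpose_mul, Matrix.transpose_transpose]
  have hB : (Mᵀ * M).IsHermitian := by
    simpa [Matrix.IsHermitian] using hBt
  have hquad := quad_lower' (Mᵀ * M) hB α₁ hmin
  set A : Matrix (Fin n) (Fin n) ℝ := 1 + μ • (Mᵀ * M) with hAdef
  have hAq : ∀ w : Fin n → ℝ, c * (w ⬝ᵥ w) ≤ w ⬝ᵥ (A *ᵥ w) := by
    intro w
    have hAw : A *ᵥ w = w + μ • ((Mᵀ * M) *ᵥ w) := by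
      simp [hAdef, Matrix.add_mulVec, Matrix.one_mulVec, Matrix.smul_mulVec]
    rw [hAw]
    have h1 := hquad w
    simp only [dotProduct_add, dotProduct_smul, smul_eq_mul]
    rw [hcdef]
    nlinarith [mul_le_mul_of_nonneg_left h1 hμ.le]
  have hAherm : A.IsHermitian := by
    have : Aᵀ = A := by rw [hAdef, Matrix.transpose_add, Matrix.transpose_one,
      Matrix.transpose_smul, hBt]
    simpa [Matrix.IsHermitian] using this
  have hApos : A.PosDef := by
    refine Matrix.posDef_iff_dotProduct_mulVec.mpr ⟨hAherm, fun x hx => ?_⟩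
    have h1 := hAq x
    have h2 : 0 < x ⬝ᵥ x := by
      rcases (Finset.sum_nonneg fun i (_ : i ∈ Finset.univ) =>
        mul_self_nonneg (x i)).lt_or_eq with h | h
      · exact h
      · exact absurd (dotProduct_self_eq_zero.mp h.symm) hx
    simpa using lt_of_lt_of_le (by nlinarith) h1
  have hdet : IsUnit A.det := hApos.det_pos.ne'.isUnit
  have hAiA : A⁻¹ * A = 1 := Matrix.nonsing_inv_mul A hdet
  have hAAi : A * A⁻¹ = 1 := Matrix.mul_nonsing_inv A hdet
  have hMdet : IsUnit M.det := (Matrix.isUnit_iff_isUnit_det M).1 hM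
  have hMMi : M * M⁻¹ = 1 := Matrix.mul_nonsing_inv M hMdet
  have hAM : A * M⁻¹ = M⁻¹ + μ • Mᵀ := by
    rw [hAdef, add_mul, one_mul, Matrix.smul_mul, Matrix.mul_assoc, hMMi, Matrix.mul_one]
  have hE : ∀ k, Φ (k + 1) - M⁻¹ = A⁻¹ * (Φ k - M⁻¹) := by
    intro k
    rw [hrec k]
    have h : Φ k + μ • Mᵀ = (Φ k - M⁻¹) + A * M⁻¹ := by
      rw [hAM]; abel
    rw [h, Matrix.mul_add, ← Matrix.mul_assoc, hAiA, Matrix.one_mul, add_sub_cancel_right]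
  have hcontr : ∀ X : Matrix (Fin n) (Fin n) ℝ, ‖A⁻¹ * X‖ ≤ (1 / c) * ‖X‖ := by
    intro X
    have h := mat_lower' A c hc0 (vec_lower' A c hc0 hAq) (A⁻¹ * X)
    rw [← Matrix.mul_assoc, hAAi, Matrix.one_mul] at h
    calc ‖A⁻¹ * X‖ = (1 / c) * (c * ‖A⁻¹ * X‖) := by field_simp
      _ ≤ (1 / c) * ‖X‖ := mul_le_mul_of_nonneg_left h (by positivity)
  have bound : ∀ k, ‖Φ k - M⁻¹‖ ≤ (1 / c) ^ k * ‖Φ 0 - M⁻¹‖ := by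
    intro k
    induction k with
    | zero => simp
    | succ k ih =>
      rw [hE k]
      calc ‖A⁻¹ * (Φ k - M⁻¹)‖ ≤ (1 / c) * ‖Φ k - M⁻¹‖ := hcontr _
        _ ≤ (1 / c) * ((1 / c) ^ k * ‖Φ 0 - M⁻¹‖) :=
          mul_le_mul_of_nonneg_left ih (by positivity)
        _ = (1 / c) ^ (k + 1) * ‖Φ 0 - M⁻¹‖ := by ring
  refine ⟨?_, bound⟩
  have hr1 : (1 / c) < 1 := by rw [div_lt_one hc0]; linarith
  have hr0 : (0:ℝ) ≤ 1 / c := by positivity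
  have h0 : Filter.Tendsto (fun k => (1 / c) ^ k * ‖Φ 0 - M⁻¹‖) Filter.atTop (nhds 0) := by
    simpa using (tendsto_pow_atTop_nhds_zero_of_lt_one hr0 hr1).mul_const ‖Φ 0 - M⁻¹‖
  have hsq := squeeze_zero_norm bound h0
  exact tendsto_sub_nhds_zero_iff.mp hsq
end
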